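/- Define h(z) = (1+z)²·(1+z²)/(1 + z² + z⁴) and f₀(z) = (√(h(z)) − 1)/(√(h(z)) + 1) on D, where √ is the holomorphic branch of the square root with √1 = 1. Then f₀ ∈ 𝒯 with f₀'(0) = 1/2, but f₀ is not injective on D (its derivative vanishes at the point −1/4 + i√3/4 + (1/2)·√(−9/2 − i√3/2) of D); hence 𝒰 is a proper subset of 𝒯. -/

import Mathlib

open Complex Set Filter Topology

noncomputable section

/-- The open unit disc. -/
def uDisc : Set ℂ := {z : ℂ | ‖z‖ < 1}

/-- The holomorphic branch of the square root with `√1 = 1` (principal branch). -/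
def csqrt (z : ℂ) : ℂ := z ^ (1/2 : ℂ)

/-- `f` has only real Taylor coefficients at `0`, expressed by the symmetry
`f(conj z) = conj (f z)` on the unit disc. -/
def RealCoeffs (f : ℂ → ℂ) : Prop :=
  ∀ z ∈ uDisc, f ((starRingEnd ℂ) z) = (starRingEnd ℂ) (f z)

/-- The class `𝒰` of univalent self-maps of the unit disc with `f(0) = 0`,
`f'(0) > 0` and real Taylor coefficients. -/
def ClassU (f : ℂ → ℂ) : Prop :=
  DifferentiableOn ℂ f uDisc ∧ InjOn f uDisc ∧ MapsTo f uDisc uDisc ∧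
    f 0 = 0 ∧ 0 < (deriv f 0).re ∧ (deriv f 0).im = 0 ∧ RealCoeffs f

/-- The value range `V_𝒰(z0)`. -/
def VU (z0 : ℂ) : Set ℂ := {w : ℂ | ∃ f : ℂ → ℂ, ClassU f ∧ f z0 = w}

/-- The class `𝒯` of typically real holomorphic self-maps of the unit disc
with `f(0) = 0` and `f'(0) > 0`. -/
def ClassT (f : ℂ → ℂ) : Prop :=
  DifferentiableOn ℂ f uDisc ∧ MapsTo f uDisc uDisc ∧ f 0 = 0 ∧
    0 < (deriv f 0).re ∧ (deriv f 0).im = 0 ∧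
    ∀ z ∈ uDisc, 0 ≤ (f z).im * z.im

/-- The auxiliary function `h(z) = (1+z)²(1+z²)/(1+z²+z⁴)`. -/
def hAux (z : ℂ) : ℂ := (1+z)^2 * (1+z^2) / (1 + z^2 + z^4)

/-- The typically real, non-univalent function `f₀`. -/
def fZero (z : ℂ) : ℂ := (csqrt (hAux z) - 1) / (csqrt (hAux z) + 1)

/-- The critical point of `f₀` inside the unit disc. -/
def critPt : ℂ :=
  -(1/4) + Complex.I * (Real.sqrt 3 : ℂ) / 4 +
    (1/2) * csqrt (-(9/2) - Complex.I * (Real.sqrt 3 : ℂ) / 2)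

/-! ### Auxiliary lemmas on `csqrt` -/

lemma csqrt_sq (z : ℂ) : csqrt z ^ 2 = z := by
  by_cases hz : z = 0
  · simp [csqrt, hz, Complex.zero_cpow (by norm_num : (1/2:ℂ) ≠ 0)]
  · rw [csqrt, sq, ← Complex.cpow_add _ _ hz]
    norm_num

lemma csqrt_arg_half (z : ℂ) (hz : z ≠ 0) :
    (csqrt z).re = Real.exp ((Complex.log z).re * (1/2)) * Real.cos (Complex.arg z / 2) ∧
    (csqrt z).im = Real.exp ((Complex.log z).re * (1/2)) * Real.sin (Complex.arg z / 2) := by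
  rw [csqrt, Complex.cpow_def_of_ne_zero hz]
  constructor
  · rw [Complex.exp_re]
    simp [Complex.mul_re, Complex.mul_im, Complex.log_im]
    ring_nf
  · rw [Complex.exp_im]
    simp [Complex.mul_re, Complex.mul_im, Complex.log_im]
    ring_nf

lemma csqrt_re_nonneg (z : ℂ) : 0 ≤ (csqrt z).re := by
  by_cases hz : z = 0
  · simp [csqrt, hz, Complex.zero_cpow (by norm_num : (1/2:ℂ) ≠ 0)]
  · rw [(csqrt_arg_half z hz).1]
    have h1 := Complex.neg_pi_lt_arg z
    have h2 := Complex.arg_le_pi z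
    have hpi := Real.pi_pos
    have : (0:ℝ) ≤ Real.cos (Complex.arg z / 2) :=
      Real.cos_nonneg_of_mem_Icc ⟨by linarith, by linarith⟩
    positivity

lemma csqrt_re_pos {z : ℂ} (hz : z ∈ Complex.slitPlane) : 0 < (csqrt z).re := by
  have hz0 : z ≠ 0 := Complex.slitPlane_ne_zero hz
  rw [(csqrt_arg_half z hz0).1]
  have h1 := Complex.neg_pi_lt_arg z
  have h2 := Complex.arg_le_pi z
  have hne : Complex.arg z ≠ Real.pi := by
    intro h
    rcases hz with h' | h'
    · rcases Complex.arg_eq_pi_iff.mp h with ⟨hlt, _⟩; linarith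
    · exact h' (Complex.arg_eq_pi_iff.mp h).2
  have hpi := Real.pi_pos
  have : (0:ℝ) < Real.cos (Complex.arg z / 2) := by
    apply Real.cos_pos_of_mem_Ioo
    constructor
    · linarith
    · rcases lt_of_le_of_ne h2 hne with h
      linarith
  positivity

lemma csqrt_im_pos {z : ℂ} (hz : 0 < z.im) : 0 < (csqrt z).im := by
  have hz0 : z ≠ 0 := by intro h; rw [h] at hz; simp at hz
  rw [(csqrt_arg_half z hz0).2]
  have h2 := Complex.arg_le_pi z
  have hpos : 0 < Complex.arg z :=
    lt_of_le_of_ne (Complex.arg_nonneg_iff.mpr hz.le)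
      (fun h => hz.ne' (Complex.arg_eq_zero_iff.mp h.symm).2)
  have hpi := Real.pi_pos
  have : (0:ℝ) < Real.sin (Complex.arg z / 2) :=
    Real.sin_pos_of_pos_of_lt_pi (by linarith) (by linarith)
  positivity

lemma csqrt_im_neg {z : ℂ} (hz : z.im < 0) : (csqrt z).im < 0 := by
  have hz0 : z ≠ 0 := by intro h; rw [h] at hz; simp at hz
  rw [(csqrt_arg_half z hz0).2]
  have h1 := Complex.neg_pi_lt_arg z
  have hneg : Complex.arg z < 0 := Complex.arg_neg_iff.mpr hz
  have hpi := Real.pi_pos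
  have hs : Real.sin (Complex.arg z / 2) < 0 := by
    have := Real.sin_pos_of_pos_of_lt_pi (x := -(Complex.arg z / 2)) (by linarith) (by linarith)
    rw [Real.sin_neg] at this; linarith
  have he := Real.exp_pos ((Complex.log z).re * (1/2))
  nlinarith

lemma csqrt_one : csqrt 1 = 1 := Complex.one_cpow _

/-! ### The unit disc -/

lemma mem_uDisc {z : ℂ} : z ∈ uDisc ↔ ‖z‖ < 1 := Iff.rfl

lemma mem_uDisc_of_normSq {z : ℂ} (h : Complex.normSq z < 1) : z ∈ uDisc := by
  rw [mem_uDisc]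
  nlinarith [Complex.sq_norm z, norm_nonneg z]

lemma normSq_lt_one_of_mem {z : ℂ} (h : z ∈ uDisc) : Complex.normSq z < 1 := by
  rw [mem_uDisc] at h
  nlinarith [Complex.sq_norm z, norm_nonneg z]

lemma uDisc_eq_ball : uDisc = Metric.ball (0:ℂ) 1 := by
  ext z
  simp [uDisc, Metric.mem_ball, Complex.dist_eq]

lemma isOpen_uDisc : IsOpen uDisc := uDisc_eq_ball ▸ Metric.isOpen_ball

lemma zero_mem_uDisc : (0:ℂ) ∈ uDisc := by
  show ‖(0:ℂ)‖ < 1; simp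

/-! ### Properties of `hAux` on the disc -/

lemma Q_ne_zero {z : ℂ} (hz : z ∈ uDisc) : (1 + z^2 + z^4 : ℂ) ≠ 0 := by
  intro h
  have h6 : z ^ 6 = 1 := by linear_combination (z^2 - 1) * h
  have : ‖z‖ ^ 6 = 1 := by
    rw [← norm_pow, h6, norm_one]
  have hlt : ‖z‖ < 1 := hz
  have := pow_lt_one₀ (norm_nonneg z) hlt (by norm_num : (6:ℕ) ≠ 0)
  linarith

/-- the key inequality: on the upper half disc, `Im (hAux z) > 0`. -/
lemma im_hAux_pos {z : ℂ} (hz : z ∈ uDisc) (him : 0 < z.im) : 0 < (hAux z).im := by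
  have hQ := Q_ne_zero hz
  have hns := normSq_lt_one_of_mem hz
  rw [Complex.normSq_apply] at hns
  set x := z.re with hx
  set y := z.im with hy
  rw [hAux, Complex.div_im, div_sub_div_same]
  have hden : 0 < Complex.normSq (1 + z^2 + z^4) := Complex.normSq_pos.mpr hQ
  apply div_pos ?_ hden
  have hH : (0:ℝ) < 1 + x + 3*x^2 + x^3 + x^4 - y^2 + x*y^2 + 2*x^2*y^2 + y^4 := by
    nlinarith [sq_nonneg (y^2 + (x + 2*x^2 - 1)/2), sq_nonneg (x + 1/5)]
  have key : ((1+z)^2 * (1+z^2)).im * (1 + z^2 + z^4).re -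
      ((1+z)^2 * (1+z^2)).re * (1 + z^2 + z^4).im =
      2*y*(1 - x^2 - y^2)*(1 + x + 3*x^2 + x^3 + x^4 - y^2 + x*y^2 + 2*x^2*y^2 + y^4) := by
    simp only [Complex.add_re, Complex.add_im, Complex.mul_re, Complex.mul_im, Complex.one_re,
      Complex.one_im, pow_succ, pow_zero, one_mul, ← hx, ← hy]
    ring
  rw [key]
  have : 0 < 1 - x^2 - y^2 := by nlinarith
  positivity

lemma im_hAux_neg {z : ℂ} (hz : z ∈ uDisc) (him : z.im < 0) : (hAux z).im < 0 := by
  have h1 : (starRingEnd ℂ) z ∈ uDisc := by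
    rw [mem_uDisc] at hz ⊢; rwa [Complex.norm_conj]
  have h2 : 0 < ((starRingEnd ℂ) z).im := by simpa using him
  have h3 := im_hAux_pos h1 h2
  have h4 : hAux ((starRingEnd ℂ) z) = (starRingEnd ℂ) (hAux z) := by
    simp [hAux, map_div₀, map_add, map_pow, map_one]
  rw [h4] at h3
  simpa using h3

lemma hAux_real {x : ℝ} (hx : |x| < 1) :
    hAux (x:ℂ) = (((1+x)^2 * (1+x^2) / (1 + x^2 + x^4) : ℝ) : ℂ) := by
  rw [hAux]; push_cast; ring

lemma hAux_slit {z : ℂ} (hz : z ∈ uDisc) : hAux z ∈ Complex.slitPlane := by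
  rcases lt_trichotomy z.im 0 with h | h | h
  · exact Or.inr (im_hAux_neg hz h).ne
  · left
    have hzr : z = (z.re : ℂ) := by
      apply Complex.ext <;> simp [h]
    have habs : |z.re| < 1 := by
      have := mem_uDisc.mp hz
      rw [hzr, Complex.norm_real, Real.norm_eq_abs] at this
      exact this
    rw [hzr, hAux_real habs, Complex.ofReal_re]
    have h1 : -1 < z.re := (abs_lt.mp habs).1
    have h2 : (0:ℝ) < (1+z.re)^2 := pow_pos (by linarith) 2
    have h3 : (0:ℝ) < 1 + z.re^2 := by positivity
    have h4 : (0:ℝ) < 1 + z.re^2 + z.re^4 := by positivity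
    exact div_pos (mul_pos h2 h3) h4
  · exact Or.inr (im_hAux_pos hz h).ne'

lemma w_re_pos {z : ℂ} (hz : z ∈ uDisc) : 0 < (csqrt (hAux z)).re :=
  csqrt_re_pos (hAux_slit hz)

lemma w_add_one_ne {z : ℂ} (hz : z ∈ uDisc) : csqrt (hAux z) + 1 ≠ 0 := by
  intro h
  have : (csqrt (hAux z) + 1).re = 0 := by rw [h]; simp
  rw [Complex.add_re, Complex.one_re] at this
  linarith [w_re_pos hz]

/-! ### Derivative of `fZero` -/

lemma hAux_hasDerivAt {z : ℂ} (hz : z ∈ uDisc) :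
    HasDerivAt hAux
      (((2*(1+z)*(1+z^2) + (1+z)^2*(2*z)) * (1+z^2+z^4)
        - (1+z)^2*(1+z^2)*(2*z+4*z^3)) / (1+z^2+z^4)^2) z := by
  have hN : HasDerivAt (fun z : ℂ => (1+z)^2*(1+z^2))
      (2*(1+z)*(1+z^2) + (1+z)^2*(2*z)) z := by
    have h := (((hasDerivAt_id z).const_add 1).pow 2).mul
      (((hasDerivAt_id z).pow 2).const_add 1)
    simp only [id_eq] at h
    push_cast at h
    refine h.congr_deriv ?_
    simp only [Pi.pow_apply, id_eq]
    ring
  have hQd : HasDerivAt (fun z : ℂ => 1+z^2+z^4) (2*z+4*z^3) z := by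
    have h := (((hasDerivAt_id z).pow 2).const_add 1).add ((hasDerivAt_id z).pow 4)
    simp only [id_eq] at h
    push_cast at h
    refine h.congr_deriv ?_
    ring
  exact hN.div hQd (Q_ne_zero hz)

lemma fZero_hasDerivAt {z : ℂ} (hz : z ∈ uDisc) :
    HasDerivAt fZero
      ((1/2 * (hAux z) ^ ((1/2:ℂ)-1) *
        (((2*(1+z)*(1+z^2) + (1+z)^2*(2*z)) * (1+z^2+z^4)
          - (1+z)^2*(1+z^2)*(2*z+4*z^3)) / (1+z^2+z^4)^2)) * 2
        / (csqrt (hAux z) + 1)^2) z := by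
  have hh := hAux_hasDerivAt hz
  have hc : HasDerivAt (fun x : ℂ => csqrt x) ((1/2:ℂ) * (hAux z) ^ ((1/2:ℂ)-1)) (hAux z) :=
    (Complex.hasStrictDerivAt_cpow_const (hAux_slit hz)).hasDerivAt
  have hcomp : HasDerivAt (fun y => csqrt (hAux y))
      ((1/2:ℂ) * (hAux z) ^ ((1/2:ℂ)-1) *
        (((2*(1+z)*(1+z^2) + (1+z)^2*(2*z)) * (1+z^2+z^4)
          - (1+z)^2*(1+z^2)*(2*z+4*z^3)) / (1+z^2+z^4)^2)) z := hc.comp z hh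
  have hw1 := w_add_one_ne hz
  have hfin := (hcomp.sub_const 1).div (hcomp.add_const 1) hw1
  refine hfin.congr_deriv ?_
  ring

lemma differentiableOn_fZero : DifferentiableOn ℂ fZero uDisc := fun _ hz =>
  (fZero_hasDerivAt hz).differentiableAt.differentiableWithinAt

/-! ### Values at `0` -/

lemma hAux_zero : hAux 0 = 1 := by norm_num [hAux]

lemma fZero_zero : fZero 0 = 0 := by
  rw [fZero, hAux_zero, csqrt_one]
  norm_num

lemma deriv_fZero_zero : deriv fZero 0 = 1/2 := by
  have h := (fZero_hasDerivAt zero_mem_uDisc).deriv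
  rw [h, hAux_zero, csqrt_one]
  norm_num

/-! ### The critical point -/

lemma sqrt3_bounds : (1:ℝ) ≤ Real.sqrt 3 ∧ Real.sqrt 3 ≤ 2 ∧ (Real.sqrt 3)^2 = 3 := by
  have h3 : (Real.sqrt 3)^2 = 3 := Real.sq_sqrt (by norm_num)
  have h0 : 0 ≤ Real.sqrt 3 := Real.sqrt_nonneg 3
  refine ⟨?_, ?_, h3⟩ <;> nlinarith

lemma critPt_mem : critPt ∈ uDisc := by
  obtain ⟨hs1, hs2, hs3⟩ := sqrt3_bounds
  set s : ℝ := Real.sqrt 3 with hsdef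
  set e : ℂ := csqrt (-(9/2) - Complex.I * (s:ℂ) / 2) with hedef
  have he2 : e^2 = -(9/2) - Complex.I * (s:ℂ) / 2 := csqrt_sq _
  set a : ℝ := e.re with hadef
  set b : ℝ := e.im with hbdef
  have hre : a^2 - b^2 = -(9/2) := by
    have := congrArg Complex.re he2
    simpa [pow_two, Complex.mul_re, Complex.mul_im, ← hadef, ← hbdef] using this
  have him : 2*(a*b) = -(s/2) := by
    have := congrArg Complex.im he2
    simp [pow_two, Complex.mul_re, Complex.mul_im, ← hadef, ← hbdef] at this
    linarith
  have ha0 : 0 ≤ a := csqrt_re_nonneg _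
  have hapos : 0 < a := by
    rcases lt_or_eq_of_le ha0 with h | h
    · exact h
    · exfalso; rw [← h] at him; simp at him; nlinarith
  have hbneg : b < 0 := by nlinarith
  have hb2 : b ≤ -2 := by nlinarith
  have hsumle : a^2 + b^2 ≤ 4.6 := by nlinarith [sq_nonneg a, sq_nonneg b]
  have hcre : critPt.re = -(1/4) + a/2 := by
    simp [critPt, ← hedef, Complex.add_re, Complex.mul_re, Complex.div_re, ← hadef]
    ring
  have hcim : critPt.im = s/4 + b/2 := by
    simp [critPt, ← hedef, Complex.add_im, Complex.mul_im, Complex.div_im, ← hbdef]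
    ring
  apply mem_uDisc_of_normSq
  rw [Complex.normSq_apply, hcre, hcim]
  nlinarith

lemma deriv_fZero_critPt : deriv fZero critPt = 0 := by
  have hs : ((Real.sqrt 3 : ℝ):ℂ)^2 = 3 := by
    rw [← Complex.ofReal_pow, Real.sq_sqrt (by norm_num : (3:ℝ) ≥ 0)]
    norm_num
  have he2 : (csqrt (-(9/2) - Complex.I * (Real.sqrt 3 : ℂ) / 2))^2
      = -(9/2) - Complex.I * (Real.sqrt 3 : ℂ) / 2 := csqrt_sq _
  have hu : critPt^2 - (-(1/2) + Complex.I * (Real.sqrt 3 : ℂ)/2) * critPt + 1 = 0 := by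
    rw [critPt]
    linear_combination (1/4) * he2 + (-((Real.sqrt 3:ℝ):ℂ)^2/16) * Complex.I_sq + (1/16) * hs
  have hR : critPt^4 + critPt^3 + 3*critPt^2 + critPt + 1 = 0 := by
    linear_combination (critPt^2 + (1/2 + Complex.I * ((Real.sqrt 3:ℝ):ℂ)/2)*critPt + 1) * hu
      + (((Real.sqrt 3:ℝ):ℂ)^2*critPt^2/4) * Complex.I_sq + (-critPt^2/4) * hs
  have hV : (2*(1+critPt)*(1+critPt^2) + (1+critPt)^2*(2*critPt)) * (1+critPt^2+critPt^4)
      - (1+critPt)^2*(1+critPt^2)*(2*critPt+4*critPt^3) = 0 := by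
    linear_combination (2 - 2*critPt^2) * hR
  have h := (fZero_hasDerivAt critPt_mem).deriv
  rw [h, hV]
  simp

/-! ### Non-injectivity -/

lemma i_half_mem : (Complex.I/2 : ℂ) ∈ uDisc := by
  apply mem_uDisc_of_normSq
  simp [Complex.normSq_apply]
  norm_num

lemma pt2_mem : (-(1/4) + 3/4 * Complex.I : ℂ) ∈ uDisc := by
  apply mem_uDisc_of_normSq
  simp [Complex.normSq_apply]
  norm_num

lemma hAux_eq_pair : hAux (Complex.I/2) = hAux (-(1/4) + 3/4 * Complex.I) := by
  rw [hAux, hAux, div_eq_div_iff (Q_ne_zero i_half_mem) (Q_ne_zero pt2_mem)]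
  linear_combination (15/32 - (87/256)*Complex.I - (231/1024)*Complex.I^2
    + (81/1024)*Complex.I^3 - (9/1024)*Complex.I^4 + (27/1024)*Complex.I^5) * Complex.I_sq

lemma not_injOn_fZero : ¬ InjOn fZero uDisc := by
  intro h
  have heq : fZero (Complex.I/2) = fZero (-(1/4) + 3/4 * Complex.I) := by
    rw [fZero, fZero, hAux_eq_pair]
  have := h i_half_mem pt2_mem heq
  rw [Complex.ext_iff] at this
  simp at this

/-! ### `fZero` is typically real -/

lemma fZero_mapsTo : MapsTo fZero uDisc uDisc := by
  intro z hz
  set w := csqrt (hAux z) with hw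
  have hwre := w_re_pos hz
  have hne := w_add_one_ne hz
  apply mem_uDisc_of_normSq
  rw [fZero, ← hw, Complex.normSq_div]
  rw [div_lt_one (Complex.normSq_pos.mpr hne)]
  rw [Complex.normSq_apply, Complex.normSq_apply]
  simp only [Complex.sub_re, Complex.sub_im, Complex.add_re, Complex.add_im,
    Complex.one_re, Complex.one_im]
  nlinarith

lemma fZero_typically_real : ∀ z ∈ uDisc, 0 ≤ (fZero z).im * z.im := by
  intro z hz
  have hne := w_add_one_ne hz
  have hnsq : 0 < Complex.normSq (csqrt (hAux z) + 1) := Complex.normSq_pos.mpr hne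
  have him : (fZero z).im = 2 * (csqrt (hAux z)).im / Complex.normSq (csqrt (hAux z) + 1) := by
    rw [fZero, Complex.div_im]
    field_simp
    simp only [Complex.add_im, Complex.add_re, Complex.sub_im, Complex.sub_re, Complex.one_re, Complex.one_im, Complex.neg_re, Complex.neg_im]
    ring
  rcases lt_trichotomy z.im 0 with h | h | h
  · have h1 := csqrt_im_neg (im_hAux_neg hz h)
    have : (fZero z).im < 0 := by
      rw [him]; apply div_neg_of_neg_of_pos; linarith; exact hnsq
    nlinarith
  · rw [h]; simp
  · have h1 := csqrt_im_pos (im_hAux_pos hz h)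
    have : 0 < (fZero z).im := by rw [him]; positivity
    nlinarith

lemma classT_fZero : ClassT fZero := by
  refine ⟨differentiableOn_fZero, fZero_mapsTo, fZero_zero, ?_, ?_, fZero_typically_real⟩
  · rw [deriv_fZero_zero]; norm_num
  · rw [deriv_fZero_zero]; norm_num

/-! ### `ClassU ⊆ ClassT` -/

lemma classU_subset_classT {f : ℂ → ℂ} (hf : ClassU f) : ClassT f := by
  obtain ⟨hdiff, hinj, hmaps, hf0, hre, him0, hreal⟩ := hf
  refine ⟨hdiff, hmaps, hf0, hre, him0, ?_⟩
  have hnz : ∀ z ∈ uDisc, z.im ≠ 0 → (f z).im ≠ 0 := by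
    intro z hz hzim h0
    have hconj_mem : (starRingEnd ℂ) z ∈ uDisc := by
      show ‖(starRingEnd ℂ) z‖ < 1
      rw [Complex.norm_conj]; exact hz
    have h1 : f ((starRingEnd ℂ) z) = f z := by
      rw [hreal z hz, Complex.conj_eq_iff_im.mpr h0]
    have h2 := hinj hconj_mem hz h1
    have h3 := congrArg Complex.im h2
    simp only [Complex.conj_im] at h3
    exact hzim (by linarith)
  have hda : DifferentiableAt ℂ f 0 :=
    hdiff.differentiableAt (isOpen_uDisc.mem_nhds zero_mem_uDisc)
  have hslope : Tendsto (slope f 0) (𝓝[≠] 0) (𝓝 (deriv f 0)) :=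
    hasDerivAt_iff_tendsto_slope.mp hda.hasDerivAt
  have hmap2 : Tendsto (fun t : ℝ => Complex.I * (t:ℂ)) (𝓝[>] (0:ℝ)) (𝓝[≠] (0:ℂ)) := by
    apply tendsto_nhdsWithin_of_tendsto_nhds_of_eventually_within
    · have hc : Continuous (fun t : ℝ => Complex.I * (t:ℂ)) := by continuity
      have := hc.tendsto 0
      simp only [Complex.ofReal_zero, mul_zero] at this
      exact this.mono_left nhdsWithin_le_nhds
    · filter_upwards [self_mem_nhdsWithin] with t ht
      simp only [Set.mem_Ioi] at ht
      simp only [Set.mem_compl_iff, Set.mem_singleton_iff]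
      exact mul_ne_zero Complex.I_ne_zero (by simpa [Complex.ofReal_eq_zero] using ht.ne')
  have h3 : Tendsto (fun t : ℝ => ((slope f 0) (Complex.I * (t:ℂ))).re) (𝓝[>] (0:ℝ))
      (𝓝 (deriv f 0).re) := (Complex.continuous_re.tendsto _).comp (hslope.comp hmap2)
  have h4 : ∀ᶠ t : ℝ in 𝓝[>] (0:ℝ), 0 < ((slope f 0) (Complex.I*(t:ℂ))).re :=
    h3.eventually (eventually_gt_nhds hre)
  have h5 : Set.Ioo (0:ℝ) 1 ∈ 𝓝[>] (0:ℝ) := Ioo_mem_nhdsGT_of_mem ⟨le_refl 0, one_pos⟩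
  obtain ⟨t, ht1, ht2⟩ := (h4.and (eventually_mem_set.mpr h5)).exists
  set p : ℂ := Complex.I * t with hpdef
  have hpim : p.im = t := by simp [hpdef]
  have hpre0 : p.re = 0 := by simp [hpdef]
  have hpmem : p ∈ uDisc := by
    show ‖p‖ < 1
    rw [hpdef]
    rw [norm_mul, Complex.norm_I, Complex.norm_real, Real.norm_eq_abs, one_mul]
    rw [abs_of_pos ht2.1]
    exact ht2.2
  have hfpim : 0 < (f p).im := by
    have hp0 : p ≠ 0 := by
      intro h
      rw [h] at hpim
      simp at hpim
      exact ht2.1.ne hpim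
    have hfp : f p = slope f 0 p * p := by
      rw [slope_def_field, hf0]
      field_simp
      ring
    have : (f p).im = (slope f 0 p).re * t := by
      rw [hfp, Complex.mul_im, hpim, hpre0]
      ring
    rw [this]
    exact mul_pos ht1 ht2.1
  have hupper : ∀ z ∈ uDisc, 0 < z.im → 0 < (f z).im := by
    intro z hz hzim
    by_contra hle
    push_neg at hle
    have hne := hnz z hz (ne_of_gt hzim)
    have hlt : (f z).im < 0 := lt_of_le_of_ne hle hne
    set S : Set ℂ := uDisc ∩ {w : ℂ | 0 < w.im} with hSdef
    have hconv : Convex ℝ S := by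
      rw [hSdef, uDisc_eq_ball]
      exact (convex_ball (0:ℂ) 1).inter (convex_halfSpace_im_gt 0)
    have hcont : ContinuousOn (fun w => (f w).im) S :=
      Complex.continuous_im.comp_continuousOn (hdiff.continuousOn.mono inter_subset_left)
    have hzS : z ∈ S := ⟨hz, hzim⟩
    have hpS : p ∈ S := ⟨hpmem, by rw [Set.mem_setOf_eq, hpim]; exact ht2.1⟩
    have hIcc : (0:ℝ) ∈ Set.Icc ((f z).im) ((f p).im) := ⟨hlt.le, hfpim.le⟩
    obtain ⟨x, hxS, hfx⟩ := hconv.isPreconnected.intermediate_value hzS hpS hcont hIcc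
    exact hnz x hxS.1 (ne_of_gt hxS.2) hfx
  intro z hz
  rcases lt_trichotomy z.im 0 with h | h | h
  · have hconj_mem : (starRingEnd ℂ) z ∈ uDisc := by
      show ‖(starRingEnd ℂ) z‖ < 1
      rw [Complex.norm_conj]; exact hz
    have h1 : 0 < ((starRingEnd ℂ) z).im := by simp [Complex.conj_im]; linarith
    have h2 := hupper _ hconj_mem h1
    rw [hreal z hz] at h2
    simp only [Complex.conj_im] at h2
    nlinarith
  · rw [h]; simp
  · have := hupper z hz h
    positivity

theorem ClassU_ssubset_ClassT :
    ClassT fZero ∧ deriv fZero 0 = 1/2 ∧ ¬ InjOn fZero uDisc ∧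
    critPt ∈ uDisc ∧ deriv fZero critPt = 0 ∧
    {f : ℂ → ℂ | ClassU f} ⊂ {f : ℂ → ℂ | ClassT f} := by
  refine ⟨classT_fZero, deriv_fZero_zero, not_injOn_fZero, critPt_mem, deriv_fZero_critPt, ?_⟩
  constructor
  · intro f hf
    exact classU_subset_classT hf
  · intro hcon
    exact not_injOn_fZero (hcon classT_fZero).2.1
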